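/- Assume θ_i = 0 for all i and the conditions of Theorem 2 case (i) with pivotal user j (so the allowing-partial-revocation equilibrium has d_j* = m_j - (I-j)d^max ∈ (0, d^max)). If additionally ln( ((I-j+1)d^max + ε_i) / ((I-j)d^max + ε_i) ) ≥ ξ_i ℓ_i d^max for all i ∈ {j, j+1, …, I}, then the profile d_i = 0 for i < j and d_i = d^max for i ≥ j is a Nash equilibrium of the restricted game where each user's strategy set is {0, d^max}. -/

import Mathlib

open Finset

/-- Payoff with negligible unlearning costs (`θ_i = 0`). -/
noncomputable def payoff0 {I : ℕ} (ξ ℓ ε : Fin I → ℝ) (i : Fin I)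
    (d : Fin I → ℝ) : ℝ :=
  Real.log (∑ j, d j + ε i) - ξ i * ℓ i * d i

/-- Nash equilibrium of the restricted game forbidding partial revocation:
each user's strategy set is `{0, d^max}`. -/
def IsNashRestricted {I : ℕ} (ξ ℓ ε : Fin I → ℝ) (dmax : ℝ)
    (d : Fin I → ℝ) : Prop :=
  ∀ i : Fin I, ∀ x ∈ ({0, dmax} : Set ℝ),
    payoff0 ξ ℓ ε i (Function.update d i x) ≤ payoff0 ξ ℓ ε i d

/-- Corollary 2, first bullet: under Theorem 2 case (i) with pivotal user `j`
(interior partial revocation, i.e. `(I-j-1) d^max < m j < (I-j) d^max` in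
0-indexed form), if `ln(((I-j) d^max + ε_i)/((I-j-1) d^max + ε_i)) ≥ ξ_i ℓ_i
d^max` for every user `i ≥ j`, then the profile `d_i = 0` for `i < j` and
`d_i = d^max` for `i ≥ j` is a Nash equilibrium of the restricted game. -/
theorem stmt14 (I : ℕ) (ξ ℓ ε : Fin I → ℝ) (dmax : ℝ)
    (hξ : ∀ i, 0 < ξ i) (hℓ : ∀ i, 0 < ℓ i) (hε : ∀ i, 0 < ε i)
    (hdmax : 0 < dmax)
    (m : Fin I → ℝ) (hm : ∀ i, m i = (ξ i * ℓ i)⁻¹ - ε i)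
    (horder : ∀ i k : Fin I, i < k → m i < m k)
    (j : Fin I)
    (hlo : ((I : ℝ) - (j : ℕ) - 1) * dmax < m j)
    (hhi : m j < ((I : ℝ) - (j : ℕ)) * dmax)
    (hlog : ∀ i : Fin I, j ≤ i →
      ξ i * ℓ i * dmax ≤
        Real.log ((((I : ℝ) - (j : ℕ)) * dmax + ε i) /
          (((I : ℝ) - (j : ℕ) - 1) * dmax + ε i))) :
    IsNashRestricted ξ ℓ ε dmax (fun i => if i < j then 0 else dmax) := by
  intro i x hx
  have hIj : (j : ℕ) < I := j.isLt
  have hcast : ((I : ℝ) - (j : ℕ)) ≥ 1 := by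
    have : ((j:ℕ) : ℝ) + 1 ≤ (I : ℝ) := by exact_mod_cast hIj
    linarith
  set d : Fin I → ℝ := fun k => if k < j then 0 else dmax with hd
  set S : ℝ := ((I : ℝ) - (j : ℕ)) * dmax with hS
  have hsum : (∑ k, d k) = S := by
    have hfilt : (Finset.univ.filter (fun k : Fin I => ¬ k < j)) = Finset.Ici j := by
      ext k; simp [not_lt]
    rw [hd]
    rw [Finset.sum_ite, Finset.sum_const_zero, zero_add, Finset.sum_const, hfilt,
      Fin.card_Ici, nsmul_eq_mul, Nat.cast_sub hIj.le, hS]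
  have hSpos : 0 < S + ε i := by
    have : 0 ≤ S := mul_nonneg (by linarith) hdmax.le
    have := hε i; linarith
  have hupd : ∀ y : ℝ, (∑ k, Function.update d i y k) = S - d i + y := by
    intro y
    rw [Finset.sum_update_of_mem (Finset.mem_univ i),
      Finset.sum_sdiff_eq_sub (Finset.singleton_subset_iff.mpr (Finset.mem_univ i)),
      Finset.sum_singleton, hsum]
    ring
  rcases hx with h0 | hmax
  · -- x = 0
    subst h0
    by_cases hij : i < j
    · -- d i = 0, no deviation
      have : Function.update d i 0 = d := by
        apply Function.update_eq_self_iff.mpr; simp [hd, hij]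
      rw [this]
    · -- i ≥ j, d i = dmax, deviating to 0
      have hdi : d i = dmax := by simp [hd, hij]
      have hji : j ≤ i := le_of_not_gt hij
      have hε' := hε i
      have hpos1 : 0 < ((I : ℝ) - (j : ℕ) - 1) * dmax + ε i := by
        have : 0 ≤ ((I : ℝ) - (j : ℕ) - 1) * dmax := mul_nonneg (by linarith) hdmax.le
        linarith
      have hkey := hlog i hji
      rw [Real.log_div (by linarith) (by linarith)] at hkey
      unfold payoff0
      rw [hupd, hdi, Function.update_self, hsum]
      have hSm : S - dmax + 0 + ε i = ((I : ℝ) - (j : ℕ) - 1) * dmax + ε i := by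
        rw [hS]; ring
      rw [hSm]
      have hSe : (((I : ℝ) - (j : ℕ)) * dmax + ε i) = S + ε i := by rw [hS]
      rw [hSe] at hkey
      linarith
  · -- x = dmax
    rw [hmax]
    by_cases hij : i < j
    · -- d i = 0, deviating to dmax
      have hdi : d i = 0 := by simp [hd, hij]
      unfold payoff0
      rw [hupd, hdi, Function.update_self, hsum]
      have hmi : m i < S := lt_trans (horder i j hij) hhi
      have hξℓ : 0 < ξ i * ℓ i := mul_pos (hξ i) (hℓ i)
      have hinv : (ξ i * ℓ i)⁻¹ < S + ε i := by
        have := hm i; linarith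
      have hq : 0 < (S - 0 + dmax + ε i) / (S + ε i) :=
        div_pos (by linarith) hSpos
      have hlog2 : Real.log ((S - 0 + dmax + ε i) / (S + ε i)) ≤
          (S - 0 + dmax + ε i) / (S + ε i) - 1 := Real.log_le_sub_one_of_pos hq
      rw [Real.log_div (by linarith) (by linarith)] at hlog2
      have hfrac : (S - 0 + dmax + ε i) / (S + ε i) - 1 = dmax / (S + ε i) := by
        field_simp
        ring
      rw [hfrac] at hlog2
      have hdd : dmax / (S + ε i) ≤ ξ i * ℓ i * dmax := by
        rw [div_le_iff₀ hSpos]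
        have h1 : 1 ≤ (ξ i * ℓ i) * (S + ε i) := by
          rw [← inv_le_iff_one_le_mul₀' hξℓ]; exact hinv.le
        nlinarith
      linarith
    · -- d i = dmax, no deviation
      have : Function.update d i dmax = d := by
        apply Function.update_eq_self_iff.mpr; simp [hd, hij]
      rw [this]
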